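/- Let G be a chordal graph, s a simplicial vertex of G, and v a vertex in N_G[s]. Then for every vertex x ∉ N_G[v], the closed neighborhood of x in G^s is contained in the closed neighborhood of v in G^s. -/

import Mathlib

/-- The closed neighborhood `N[v]` of a vertex. -/
def closedNbr {V : Type*} (G : SimpleGraph V) (v : V) : Set V := insert v (G.neighborSet v)

/-- A vertex is simplicial if its closed neighborhood is a clique. -/
def Simplicial {V : Type*} (G : SimpleGraph V) (s : V) : Prop := G.IsClique (closedNbr G s)

/-- A vertex is universal if it is adjacent to all other vertices. -/
def Universal {V : Type*} (G : SimpleGraph V) (v : V) : Prop := ∀ u, u ≠ v → G.Adj v u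

/-- The auxiliary graph `G^s` with respect to a simplicial vertex `s`. -/
def auxGraph {V : Type*} (G : SimpleGraph V) (s : V) : SimpleGraph V where
  Adj u v := u ≠ v ∧
    ((u ∉ closedNbr G s ∧ v ∉ closedNbr G s ∧ G.Adj u v) ∨
     (u ∈ closedNbr G s ∧ v ∈ closedNbr G s ∧ G.neighborSet u ∪ G.neighborSet v ≠ Set.univ) ∨
     (u ∈ closedNbr G s ∧ v ∉ closedNbr G s ∧ ¬ closedNbr G v ⊆ closedNbr G u) ∨
     (v ∈ closedNbr G s ∧ u ∉ closedNbr G s ∧ ¬ closedNbr G u ⊆ closedNbr G v))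
  symm := by
    constructor
    rintro u v ⟨hne, h⟩
    refine ⟨hne.symm, ?_⟩
    rcases h with ⟨h1, h2, h3⟩ | ⟨h1, h2, h3⟩ | h | h
    · exact Or.inl ⟨h2, h1, h3.symm⟩
    · exact Or.inr (Or.inl ⟨h2, h1, by rwa [Set.union_comm] at h3⟩)
    · exact Or.inr (Or.inr (Or.inr h))
    · exact Or.inr (Or.inr (Or.inl h))
  loopless := ⟨fun v h => h.1 rfl⟩

/-- A witness of an edge `uv` of `G^s`: a vertex `w ∉ N_G[s]` such that for each end `x`,
`w` is adjacent to `x` in `G` iff `x ∉ N_G[s]`. -/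
def EdgeWitness {V : Type*} (G : SimpleGraph V) (s u v w : V) : Prop :=
  w ∉ closedNbr G s ∧ (G.Adj w u ↔ u ∉ closedNbr G s) ∧ (G.Adj w v ↔ v ∉ closedNbr G s)

/-- An edge of `G^s` is collateral if it is an edge of `G` and one end is in `N_G[s]`. -/
def Collateral {V : Type*} (G : SimpleGraph V) (s u v : V) : Prop :=
  (auxGraph G s).Adj u v ∧ G.Adj u v ∧ (u ∈ closedNbr G s ∨ v ∈ closedNbr G s)

/-- A witness of a clique `K` of `G^s`: a vertex `w ∉ N_G[s]` such that `N_G[w] ∩ K` and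
`N_G[s] ∩ K` partition `K`. -/
def CliqueWitness {V : Type*} (G : SimpleGraph V) (s : V) (K : Set V) (w : V) : Prop :=
  w ∉ closedNbr G s ∧ ∀ x ∈ K, (x ∈ closedNbr G w ↔ x ∉ closedNbr G s)

/-- A graph is chordal if it has no induced cycle of length at least four. -/
def Chordal {V : Type*} (G : SimpleGraph V) : Prop :=
  ¬ ∃ (n : ℕ) (f : ZMod n → V), 4 ≤ n ∧ Function.Injective f ∧
      ∀ i j : ZMod n, G.Adj (f i) (f j) ↔ (j = i + 1 ∨ i = j + 1)


lemma four_cycle_not_chordal {V : Type*} (G : SimpleGraph V) (a b c d : V)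
    (hab : G.Adj a b) (hbc : G.Adj b c) (hcd : G.Adj c d) (hda : G.Adj d a)
    (hac : ¬ G.Adj a c) (hbd : ¬ G.Adj b d) (hacne : a ≠ c) (hbdne : b ≠ d) :
    ¬ Chordal G := by
  intro h
  apply h
  have hf : ∀ i : ZMod 4, i = 0 ∨ i = 1 ∨ i = 2 ∨ i = 3 := by decide
  refine ⟨4, fun i => if i = 0 then a else if i = 1 then b else if i = 2 then c else d,
    le_refl 4, ?_, ?_⟩
  · intro i j hij
    rcases hf i with rfl | rfl | rfl | rfl <;> rcases hf j with rfl | rfl | rfl | rfl <;>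
      simp only [if_pos, if_neg, reduceIte] at hij <;>
      first
        | rfl
        | exact absurd hij hab.ne
        | exact absurd hij.symm hab.ne
        | exact absurd hij hbc.ne
        | exact absurd hij.symm hbc.ne
        | exact absurd hij hcd.ne
        | exact absurd hij.symm hcd.ne
        | exact absurd hij.symm hda.ne
        | exact absurd hij hda.ne
        | exact absurd hij hacne
        | exact absurd hij.symm hacne
        | exact absurd hij hbdne
        | exact absurd hij.symm hbdne
  · intro i j
    rcases hf i with rfl | rfl | rfl | rfl <;> rcases hf j with rfl | rfl | rfl | rfl <;>
      simp only [if_pos, if_neg, reduceIte] <;>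
      constructor <;> intro hh <;>
      first
        | exact absurd hh G.irrefl
        | exact absurd hh hac
        | exact absurd hh.symm hac
        | exact absurd hh hbd
        | exact absurd hh.symm hbd
        | (revert hh; decide)
        | (exfalso; revert hh; decide)
        | exact Or.inl (by decide)
        | exact Or.inr (by decide)
        | assumption
        | exact hab.symm
        | exact hbc.symm
        | exact hcd.symm
        | exact hda.symm

/-- For a chordal graph G with simplicial vertex s, a vertex v ∈ N_G[s], and
x ∉ N_G[v], the closed neighborhood of x in G^s is contained in that of v in G^s. -/
theorem stmt_3 {V : Type*} [Fintype V] (G : SimpleGraph V) (s v x : V)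
    (hG : Chordal G) (hs : Simplicial G s) (hv : v ∈ closedNbr G s)
    (hx : x ∉ closedNbr G v) :
    closedNbr (auxGraph G s) x ⊆ closedNbr (auxGraph G s) v := by
  -- x is not in N[s]
  have hvx : v ≠ x := fun h => hx (by rw [← h]; exact Set.mem_insert v _)
  have hnadjvx : ¬ G.Adj v x := fun h => hx (Set.mem_insert_of_mem _ h)
  have hxs : x ∉ closedNbr G s := by
    intro hxns
    exact hnadjvx (hs hv hxns hvx)
  have hxx : x ∈ closedNbr G x := Set.mem_insert x _
  intro u hu
  rcases hu with rfl | hu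
  · -- u = x : show x ∈ N_{G^s}[v] via the aux edge v x
    refine Set.mem_insert_of_mem _ ?_
    show (auxGraph G s).Adj v u
    exact ⟨hvx, Or.inr (Or.inr (Or.inl ⟨hv, hxs, fun hsub => hx (hsub hxx)⟩))⟩
  · -- u ∈ N_{G^s}(x)
    change (auxGraph G s).Adj x u at hu
    by_cases huv : u = v
    · rw [huv]; exact Set.mem_insert v _
    refine Set.mem_insert_of_mem _ ?_
    show (auxGraph G s).Adj v u
    obtain ⟨hne, hcases⟩ := hu
    rcases hcases with ⟨_, hus, hadj⟩ | ⟨hxin, _, _⟩ | ⟨hxin, _, _⟩ | ⟨hus, _, hnsub⟩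
    · -- u ∉ N[s], G.Adj x u
      refine ⟨fun h => huv h.symm, Or.inr (Or.inr (Or.inl ⟨hv, hus, ?_⟩))⟩
      intro hsub
      exact hx (hsub (Set.mem_insert_of_mem _ (hadj.symm : G.Adj u x)))
    · exact absurd hxin hxs
    · exact absurd hxin hxs
    · -- u ∈ N[s], ¬ N[x] ⊆ N[u]
      refine ⟨fun h => huv h.symm, Or.inr (Or.inl ⟨hv, hus, ?_⟩)⟩
      intro huniv
      obtain ⟨y, hyx, hyu⟩ := Set.not_subset.mp hnsub
      -- x ∈ N(u)
      have hxu : G.Adj u x := by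
        have : x ∈ G.neighborSet v ∪ G.neighborSet u := huniv ▸ Set.mem_univ x
        rcases this with h | h
        · exact absurd (Set.mem_insert_of_mem _ h) hx
        · exact (h : G.Adj u x)
      -- y ∈ N(v)
      have hynu : y ≠ u := fun h => hyu (h ▸ Set.mem_insert y _)
      have hynadju : ¬ G.Adj u y := fun h => hyu (Set.mem_insert_of_mem _ h)
      have hyv : G.Adj v y := by
        have : y ∈ G.neighborSet v ∪ G.neighborSet u := huniv ▸ Set.mem_univ y
        rcases this with h | h
        · exact (h : G.Adj v y)
        · exact absurd h hynadju
      have hynx : y ≠ x := fun h => hnadjvx (h ▸ hyv)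
      have hxy : G.Adj y x := by
        rcases hyx with h | h
        · exact absurd h hynx
        · exact (h : G.Adj x y).symm
      have huvadj : G.Adj u v := hs hus hv huv
      exact four_cycle_not_chordal G v y x u hyv hxy hxu.symm huvadj hnadjvx (fun h => hynadju h.symm) hvx hynu hG
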